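/- (Restricted Upgrading Lemma of LDC) In LDC(𝓛) for an arbitrary lattice 𝓛 with ⊤ and ⊥: if Γ₁, x :^m A, Γ₂ ⊢ b :^ℓ B and ℓ₀ ⊑ ℓ, then Γ₁, x :^{ℓ₀ ⊔ m} A, Γ₂ ⊢ b :^ℓ B. -/

import Mathlib

/-!
The simply-typed calculus LDC(𝓛): graded by an arbitrary lattice
`𝓛 = (L, ⊓, ⊔, ⊤, ⊥, ⊑)` with greatest element `⊤` and least element `⊥`.
-/

namespace LDCL

/-- Types of LDC(𝓛): `Unit`, labelled functions `^m A → B`, labelled products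
`^m A₁ × A₂` and sums `A₁ + A₂`, with labels drawn from `L`. -/
inductive Ty (L : Type) : Type where
  | unit : Ty L
  | arr : L → Ty L → Ty L → Ty L
  | prod : L → Ty L → Ty L → Ty L
  | sum : Ty L → Ty L → Ty L

/-- Terms of LDC(𝓛), with variables named by natural numbers. -/
inductive Tm (L : Type) : Type where
  /-- variable `x` -/
  | var : ℕ → Tm L
  /-- `λ^m x:A. b` -/
  | lam : L → ℕ → Ty L → Tm L → Tm L
  /-- application `b a^m` -/
  | app : Tm L → Tm L → L → Tm L
  /-- `unit` -/
  | unit : Tm L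
  /-- `let unit be a in b` -/
  | letUnit : Tm L → Tm L → Tm L
  /-- `(a₁^m, a₂)` -/
  | pair : Tm L → L → Tm L → Tm L
  /-- `let (x^m, y) be a in b` -/
  | letPair : ℕ → L → ℕ → Tm L → Tm L → Tm L
  /-- `inj₁ a` -/
  | inj1 : Tm L → Tm L
  /-- `inj₂ a` -/
  | inj2 : Tm L → Tm L
  /-- `case a of x₁.b₁; x₂.b₂` -/
  | case : Tm L → ℕ → Tm L → ℕ → Tm L → Tm L

variable {L : Type}

/-- Free variables of a term. -/
def fv : Tm L → Finset ℕ
  | .var x => {x}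
  | .lam _ x _ b => fv b \ {x}
  | .app b a _ => fv b ∪ fv a
  | .unit => ∅
  | .letUnit a b => fv a ∪ fv b
  | .pair a _ b => fv a ∪ fv b
  | .letPair x _ y a b => fv a ∪ (fv b \ {x, y})
  | .inj1 a => fv a
  | .inj2 a => fv a
  | .case a x₁ b₁ x₂ b₂ => fv a ∪ (fv b₁ \ {x₁}) ∪ (fv b₂ \ {x₂})

/-- Capture-avoiding substitution `a{c/z}` of `c` for the free occurrences of
`z` in `a` (binders shadowing `z` are left untouched). -/
def subst (z : ℕ) (c : Tm L) : Tm L → Tm L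
  | .var x => if x = z then c else .var x
  | .lam m x A b => .lam m x A (if x = z then b else subst z c b)
  | .app b a m => .app (subst z c b) (subst z c a) m
  | .unit => .unit
  | .letUnit a b => .letUnit (subst z c a) (subst z c b)
  | .pair a m b => .pair (subst z c a) m (subst z c b)
  | .letPair x m y a b =>
      .letPair x m y (subst z c a) (if x = z ∨ y = z then b else subst z c b)
  | .inj1 a => .inj1 (subst z c a)
  | .inj2 a => .inj2 (subst z c a)
  | .case a x₁ b₁ x₂ b₂ =>
      .case (subst z c a) x₁ (if x₁ = z then b₁ else subst z c b₁)
        x₂ (if x₂ = z then b₂ else subst z c b₂)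

/-- A context is a list of labelled assumptions `x :^ℓ A`. -/
abbrev Ctx (L : Type) := List (ℕ × L × Ty L)

/-- `⌊Γ⌋`: the underlying unlabelled context. -/
def floor (Γ : Ctx L) : List (ℕ × Ty L) := Γ.map (fun e => (e.1, e.2.2))

variable [Lattice L] [BoundedOrder L]

/-- `Γ₁ ⊓ Γ₂`: pointwise meet of labels (meaningful when `⌊Γ₁⌋ = ⌊Γ₂⌋`). -/
def ctxMeet (Γ₁ Γ₂ : Ctx L) : Ctx L :=
  List.zipWith (fun e₁ e₂ => (e₁.1, e₁.2.1 ⊓ e₂.2.1, e₁.2.2)) Γ₁ Γ₂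

/-- `ℓ ⊔ Γ`: join `ℓ` onto every label of `Γ`. -/
def ctxJoin (ℓ : L) (Γ : Ctx L) : Ctx L := Γ.map (fun e => (e.1, ℓ ⊔ e.2.1, e.2.2))

/-- `Γ ⊑ Γ'`: same underlying assumptions, labels pointwise related by `⊑`. -/
def ctxLe (Γ Γ' : Ctx L) : Prop :=
  List.Forall₂ (fun e e' => e.1 = e'.1 ∧ e.2.2 = e'.2.2 ∧ e.2.1 ≤ e'.2.1) Γ Γ'

/-- The typing judgment `Γ ⊢ a :^ℓ A` of LDC(𝓛). -/
inductive Typing : Ctx L → Tm L → L → Ty L → Prop where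
  | var (Γ₁ Γ₂ : Ctx L) (x : ℕ) (ℓ : L) (A : Ty L) :
      Typing (ctxJoin ⊤ Γ₁ ++ [(x, ℓ, A)] ++ ctxJoin ⊤ Γ₂) (.var x) ℓ A
  | lam {Γ : Ctx L} {b : Tm L} {ℓ : L} {B : Ty L} (m : L) (x : ℕ) (A : Ty L) :
      Typing (Γ ++ [(x, ℓ ⊔ m, A)]) b ℓ B →
      Typing Γ (.lam m x A b) ℓ (.arr m A B)
  | app {Γ₁ Γ₂ : Ctx L} {b a : Tm L} {ℓ m : L} {A B : Ty L} :
      Typing Γ₁ b ℓ (.arr m A B) →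
      Typing Γ₂ a (ℓ ⊔ m) A →
      floor Γ₁ = floor Γ₂ →
      Typing (ctxMeet Γ₁ Γ₂) (.app b a m) ℓ B
  | unit (Γ : Ctx L) (ℓ : L) : Typing (ctxJoin ⊤ Γ) .unit ℓ .unit
  | letUnit {Γ₁ Γ₂ : Ctx L} {a b : Tm L} {ℓ : L} {B : Ty L} :
      Typing Γ₁ a ℓ .unit →
      Typing Γ₂ b ℓ B →
      floor Γ₁ = floor Γ₂ →
      Typing (ctxMeet Γ₁ Γ₂) (.letUnit a b) ℓ B
  | pair {Γ₁ Γ₂ : Ctx L} {a₁ a₂ : Tm L} {ℓ m : L} {A₁ A₂ : Ty L} :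
      Typing Γ₁ a₁ (ℓ ⊔ m) A₁ →
      Typing Γ₂ a₂ ℓ A₂ →
      floor Γ₁ = floor Γ₂ →
      Typing (ctxMeet Γ₁ Γ₂) (.pair a₁ m a₂) ℓ (.prod m A₁ A₂)
  | letPair {Γ₁ Γ₂ : Ctx L} {a b : Tm L} {ℓ m : L} {x y : ℕ} {A₁ A₂ B : Ty L} :
      Typing Γ₁ a ℓ (.prod m A₁ A₂) →
      Typing (Γ₂ ++ [(x, ℓ ⊔ m, A₁), (y, ℓ, A₂)]) b ℓ B →
      floor Γ₁ = floor Γ₂ →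
      Typing (ctxMeet Γ₁ Γ₂) (.letPair x m y a b) ℓ B
  | inj1 {Γ : Ctx L} {a₁ : Tm L} {ℓ : L} {A₁ : Ty L} (A₂ : Ty L) :
      Typing Γ a₁ ℓ A₁ → Typing Γ (.inj1 a₁) ℓ (.sum A₁ A₂)
  | inj2 {Γ : Ctx L} {a₂ : Tm L} {ℓ : L} {A₂ : Ty L} (A₁ : Ty L) :
      Typing Γ a₂ ℓ A₂ → Typing Γ (.inj2 a₂) ℓ (.sum A₁ A₂)
  | case {Γ₁ Γ₂ : Ctx L} {a b₁ b₂ : Tm L} {ℓ : L} {x₁ x₂ : ℕ} {A₁ A₂ B : Ty L} :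
      Typing Γ₁ a ℓ (.sum A₁ A₂) →
      Typing (Γ₂ ++ [(x₁, ℓ, A₁)]) b₁ ℓ B →
      Typing (Γ₂ ++ [(x₂, ℓ, A₂)]) b₂ ℓ B →
      floor Γ₁ = floor Γ₂ →
      Typing (ctxMeet Γ₁ Γ₂) (.case a x₁ b₁ x₂ b₂) ℓ B
  | subL {Γ Γ' : Ctx L} {a : Tm L} {ℓ : L} {A : Ty L} :
      Typing Γ' a ℓ A → ctxLe Γ Γ' → Typing Γ a ℓ A
  | subR {Γ : Ctx L} {a : Tm L} {ℓ ℓ' : L} {A : Ty L} :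
      Typing Γ a ℓ A → ℓ ≤ ℓ' → Typing Γ a ℓ' A

/-- Values: λ-abstractions, `unit`, pairs and injections. -/
def IsValue : Tm L → Prop
  | .lam _ _ _ _ => True
  | .unit => True
  | .pair _ _ _ => True
  | .inj1 _ => True
  | .inj2 _ => True
  | _ => False

/-- Call-by-name small-step reduction `⊢ a ⇝ a'`. -/
inductive Step : Tm L → Tm L → Prop where
  | appBeta (m : L) (x : ℕ) (A : Ty L) (b a : Tm L) :
      Step (.app (.lam m x A b) a m) (subst x a b)
  | letUnitBeta (b : Tm L) :
      Step (.letUnit .unit b) b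
  | letPairBeta (x : ℕ) (m : L) (y : ℕ) (a₁ a₂ b : Tm L) :
      Step (.letPair x m y (.pair a₁ m a₂) b) (subst y a₂ (subst x a₁ b))
  | caseBeta1 (a₁ : Tm L) (x₁ : ℕ) (b₁ : Tm L) (x₂ : ℕ) (b₂ : Tm L) :
      Step (.case (.inj1 a₁) x₁ b₁ x₂ b₂) (subst x₁ a₁ b₁)
  | caseBeta2 (a₂ : Tm L) (x₁ : ℕ) (b₁ : Tm L) (x₂ : ℕ) (b₂ : Tm L) :
      Step (.case (.inj2 a₂) x₁ b₁ x₂ b₂) (subst x₂ a₂ b₂)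
  | appCong {b b' : Tm L} (a : Tm L) (m : L) :
      Step b b' → Step (.app b a m) (.app b' a m)
  | letUnitCong {a a' : Tm L} (b : Tm L) :
      Step a a' → Step (.letUnit a b) (.letUnit a' b)
  | letPairCong {a a' : Tm L} (x : ℕ) (m : L) (y : ℕ) (b : Tm L) :
      Step a a' → Step (.letPair x m y a b) (.letPair x m y a' b)
  | caseCong {a a' : Tm L} (x₁ : ℕ) (b₁ : Tm L) (x₂ : ℕ) (b₂ : Tm L) :
      Step a a' → Step (.case a x₁ b₁ x₂ b₂) (.case a' x₁ b₁ x₂ b₂)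

/-- A heap is a list of weighted bindings `x ↦^ℓ a`. -/
abbrev Heap (L : Type) := List (ℕ × L × Tm L)

/-- The set of variables bound in a heap. -/
def heapDom (H : Heap L) : Finset ℕ := (H.map Prod.fst).toFinset

/-- The heap reduction judgment `[H] a ⟹^ℓ_S [H'] a'` of LDC(𝓛). -/
inductive HeapStep : Heap L → Tm L → L → Finset ℕ → Heap L → Tm L → Prop where
  | var {H₁ H₂ : Heap L} {x : ℕ} {m ℓ : L} {a : Tm L} {S : Finset ℕ} :
      ℓ ≠ ⊤ →
      HeapStep (H₁ ++ [(x, m ⊓ ℓ, a)] ++ H₂) (.var x) ℓ S (H₁ ++ [(x, m, a)] ++ H₂) a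
  | discard {H H' : Heap L} {a a' : Tm L} {ℓ ℓ' : L} {S : Finset ℕ} :
      HeapStep H a ℓ S H' a' → ℓ ≤ ℓ' → HeapStep H a ℓ' S H' a'
  | appCong {H H' : Heap L} {b b' : Tm L} {ℓ : L} {S : Finset ℕ} (a : Tm L) (m : L) :
      HeapStep H b ℓ (S ∪ fv a) H' b' →
      HeapStep H (.app b a m) ℓ S H' (.app b' a m)
  | letUnitCong {H H' : Heap L} {a a' : Tm L} {ℓ : L} {S : Finset ℕ} (b : Tm L) :
      HeapStep H a ℓ (S ∪ fv b) H' a' →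
      HeapStep H (.letUnit a b) ℓ S H' (.letUnit a' b)
  | letPairCong {H H' : Heap L} {a a' : Tm L} {ℓ : L} {S : Finset ℕ}
      (x : ℕ) (m : L) (y : ℕ) (b : Tm L) :
      HeapStep H a ℓ (S ∪ fv b) H' a' →
      HeapStep H (.letPair x m y a b) ℓ S H' (.letPair x m y a' b)
  | caseCong {H H' : Heap L} {a a' : Tm L} {ℓ : L} {S : Finset ℕ}
      (x₁ : ℕ) (b₁ : Tm L) (x₂ : ℕ) (b₂ : Tm L) :
      HeapStep H a ℓ (S ∪ fv b₁ ∪ fv b₂) H' a' →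
      HeapStep H (.case a x₁ b₁ x₂ b₂) ℓ S H' (.case a' x₁ b₁ x₂ b₂)
  | appBeta {H : Heap L} {S : Finset ℕ} (m : L) (x : ℕ) (A : Ty L) (b a : Tm L)
      (ℓ : L) {x' : ℕ} :
      x' ∉ S → x' ∉ heapDom H →
      HeapStep H (.app (.lam m x A b) a m) ℓ S
        (H ++ [(x', ℓ ⊔ m, a)]) (subst x (.var x') b)
  | letUnitBeta {H : Heap L} {S : Finset ℕ} (b : Tm L) (ℓ : L) :
      HeapStep H (.letUnit .unit b) ℓ S H b
  | letPairBeta {H : Heap L} {S : Finset ℕ} (x : ℕ) (m : L) (y : ℕ)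
      (a₁ a₂ b : Tm L) (ℓ : L) {x' y' : ℕ} :
      x' ∉ S → x' ∉ heapDom H → y' ∉ S → y' ∉ heapDom H → x' ≠ y' →
      HeapStep H (.letPair x m y (.pair a₁ m a₂) b) ℓ S
        (H ++ [(x', ℓ ⊔ m, a₁), (y', ℓ, a₂)])
        (subst y (.var y') (subst x (.var x') b))
  | caseBeta1 {H : Heap L} {S : Finset ℕ} (a₁ : Tm L) (x₁ : ℕ) (b₁ : Tm L)
      (x₂ : ℕ) (b₂ : Tm L) (ℓ : L) {x' : ℕ} :
      x' ∉ S → x' ∉ heapDom H →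
      HeapStep H (.case (.inj1 a₁) x₁ b₁ x₂ b₂) ℓ S
        (H ++ [(x', ℓ, a₁)]) (subst x₁ (.var x') b₁)
  | caseBeta2 {H : Heap L} {S : Finset ℕ} (a₂ : Tm L) (x₁ : ℕ) (b₁ : Tm L)
      (x₂ : ℕ) (b₂ : Tm L) (ℓ : L) {x' : ℕ} :
      x' ∉ S → x' ∉ heapDom H →
      HeapStep H (.case (.inj2 a₂) x₁ b₁ x₂ b₂) ℓ S
        (H ++ [(x', ℓ, a₂)]) (subst x₂ (.var x') b₂)

/-- The compatibility judgment `H ⊨ Γ` between heaps and contexts. -/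
inductive Compat : Heap L → Ctx L → Prop where
  | nil : Compat [] []
  | cons {H : Heap L} {Γ Γ₀ : Ctx L} {x : ℕ} {ℓ : L} {a : Tm L} {A : Ty L} :
      floor Γ₀ = floor Γ →
      Typing Γ₀ a ℓ A →
      Compat H (ctxMeet Γ Γ₀) →
      Compat (H ++ [(x, ℓ, a)]) (Γ ++ [(x, ℓ, A)])

/-- `n` successive heap reduction steps at label `ℓ`, where at each step the
support set is the domain of the current heap together with the free
variables of the current term. -/
inductive HeapSteps : Heap L → Tm L → L → ℕ → Heap L → Tm L → Prop where
  | refl (H : Heap L) (a : Tm L) (ℓ : L) : HeapSteps H a ℓ 0 H a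
  | step {H H' H'' : Heap L} {a a' a'' : Tm L} {ℓ : L} {n : ℕ} :
      HeapStep H a ℓ (heapDom H ∪ fv a) H' a' →
      HeapSteps H' a' ℓ n H'' a'' →
      HeapSteps H a ℓ (n + 1) H'' a''

end LDCL


namespace LDCL

variable {L : Type} [Lattice L] [BoundedOrder L]

theorem ctxJoin_append (ℓ : L) (Γ Δ : Ctx L) :
    ctxJoin ℓ (Γ ++ Δ) = ctxJoin ℓ Γ ++ ctxJoin ℓ Δ := List.map_append

theorem ctxJoin_top (ℓ : L) (Γ : Ctx L) : ctxJoin ℓ (ctxJoin ⊤ Γ) = ctxJoin ⊤ Γ := by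
  simp [ctxJoin, List.map_map, Function.comp]

theorem floor_ctxJoin (ℓ : L) (Γ : Ctx L) : floor (ctxJoin ℓ Γ) = floor Γ := by
  simp [floor, ctxJoin, List.map_map, Function.comp]

theorem ctxLe_join_meet (ℓ₀ : L) (Γ₁ Γ₂ : Ctx L) :
    ctxLe (ctxJoin ℓ₀ (ctxMeet Γ₁ Γ₂)) (ctxMeet (ctxJoin ℓ₀ Γ₁) (ctxJoin ℓ₀ Γ₂)) := by
  induction Γ₁ generalizing Γ₂ with
  | nil => simp [ctxJoin, ctxMeet, ctxLe]
  | cons e₁ t₁ ih =>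
    cases Γ₂ with
    | nil => simp [ctxJoin, ctxMeet, ctxLe]
    | cons e₂ t₂ =>
      exact List.Forall₂.cons
        ⟨rfl, rfl, le_inf (sup_le_sup_left inf_le_left _)
          (sup_le_sup_left inf_le_right _)⟩ (ih t₂)

theorem ctxLe_join_mono {Γ Γ' : Ctx L} (ℓ₀ : L) (h : ctxLe Γ Γ') :
    ctxLe (ctxJoin ℓ₀ Γ) (ctxJoin ℓ₀ Γ') := by
  induction h with
  | nil => exact List.Forall₂.nil
  | cons he _ ih =>
    exact List.Forall₂.cons ⟨he.1, he.2.1, sup_le_sup_left he.2.2 _⟩ ih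

theorem upgrade_all {Γ : Ctx L} {b : Tm L} {ℓ : L} {B : Ty L}
    (h : Typing Γ b ℓ B) (ℓ₀ : L) : Typing (ctxJoin ℓ₀ Γ) b (ℓ₀ ⊔ ℓ) B := by
  induction h with
  | var Γ₁ Γ₂ x ℓ A =>
    rw [ctxJoin_append, ctxJoin_append, ctxJoin_top, ctxJoin_top]
    exact Typing.var Γ₁ Γ₂ x (ℓ₀ ⊔ ℓ) A
  | lam m x A _ ih =>
    apply Typing.lam
    rw [ctxJoin_append] at ih
    simpa [ctxJoin, sup_assoc] using ih
  | app h1 h2 hf ih1 ih2 =>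
    refine Typing.subL (Typing.app ih1 ?_ ?_) (ctxLe_join_meet _ _ _)
    · rw [sup_assoc]; exact ih2
    · rw [floor_ctxJoin, floor_ctxJoin, hf]
  | unit Γ ℓ => rw [ctxJoin_top]; exact Typing.unit Γ _
  | letUnit h1 h2 hf ih1 ih2 =>
    refine Typing.subL (Typing.letUnit ih1 ih2 ?_) (ctxLe_join_meet _ _ _)
    rw [floor_ctxJoin, floor_ctxJoin, hf]
  | pair h1 h2 hf ih1 ih2 =>
    refine Typing.subL (Typing.pair ?_ ih2 ?_) (ctxLe_join_meet _ _ _)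
    · rw [sup_assoc]; exact ih1
    · rw [floor_ctxJoin, floor_ctxJoin, hf]
  | letPair h1 h2 hf ih1 ih2 =>
    refine Typing.subL (Typing.letPair ih1 ?_ ?_) (ctxLe_join_meet _ _ _)
    · rw [ctxJoin_append] at ih2
      simpa [ctxJoin, sup_assoc] using ih2
    · rw [floor_ctxJoin, floor_ctxJoin, hf]
  | inj1 A₂ _ ih => exact Typing.inj1 A₂ ih
  | inj2 A₁ _ ih => exact Typing.inj2 A₁ ih
  | case h1 h2 h3 hf ih1 ih2 ih3 =>
    refine Typing.subL (Typing.case ih1 ?_ ?_ ?_) (ctxLe_join_meet _ _ _)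
    · rw [ctxJoin_append] at ih2; simpa [ctxJoin] using ih2
    · rw [ctxJoin_append] at ih3; simpa [ctxJoin] using ih3
    · rw [floor_ctxJoin, floor_ctxJoin, hf]
  | subL _ hle ih => exact Typing.subL ih (ctxLe_join_mono _ hle)
  | subR _ hle ih => exact Typing.subR ih (sup_le_sup_left hle _)

theorem ctxLe_append {Γ₁ Γ₁' Γ₂ Γ₂' : Ctx L} (h1 : ctxLe Γ₁ Γ₁') (h2 : ctxLe Γ₂ Γ₂') :
    ctxLe (Γ₁ ++ Γ₂) (Γ₁' ++ Γ₂') := by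
  induction h1 with
  | nil => exact h2
  | cons he _ ih => exact List.Forall₂.cons he ih

theorem ctxLe_join_self (ℓ₀ : L) (Γ : Ctx L) : ctxLe Γ (ctxJoin ℓ₀ Γ) := by
  induction Γ with
  | nil => exact List.Forall₂.nil
  | cons e t ih => exact List.Forall₂.cons ⟨rfl, rfl, le_sup_right⟩ ih

end LDCL

/-- **Restricted Upgrading (Lemma of LDC).** In LDC(𝓛) for an arbitrary
lattice `𝓛` with `⊤` and `⊥`: if `Γ₁, x :^m A, Γ₂ ⊢ b :^ℓ B` and `ℓ₀ ⊑ ℓ`,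
then `Γ₁, x :^{ℓ₀ ⊔ m} A, Γ₂ ⊢ b :^ℓ B`. -/
theorem LDCL.restricted_upgrading {L : Type} [Lattice L] [BoundedOrder L]
    {Γ₁ Γ₂ : LDCL.Ctx L} {x : ℕ} {m ℓ ℓ₀ : L} {A B : LDCL.Ty L} {b : LDCL.Tm L}
    (h : LDCL.Typing (Γ₁ ++ [(x, m, A)] ++ Γ₂) b ℓ B)
    (hl : ℓ₀ ≤ ℓ) :
    LDCL.Typing (Γ₁ ++ [(x, ℓ₀ ⊔ m, A)] ++ Γ₂) b ℓ B := by
  have h1 := LDCL.upgrade_all h ℓ₀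
  rw [sup_eq_right.mpr hl] at h1
  refine LDCL.Typing.subL h1 ?_
  rw [LDCL.ctxJoin_append, LDCL.ctxJoin_append]
  refine LDCL.ctxLe_append (LDCL.ctxLe_append ?_ ?_) ?_
  · exact LDCL.ctxLe_join_self ℓ₀ Γ₁
  · exact List.Forall₂.cons ⟨rfl, rfl, le_rfl⟩ List.Forall₂.nil
  · exact LDCL.ctxLe_join_self ℓ₀ Γ₂
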